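/- Let G be a finite connected simple graph and let v be a vertex with deg(v) = 2.ice Then v is either a vertex of the Steinerberger boundary ∂G or a cut vertex of G (i.e. deleting v disconnects G). -/
import Mathlib


open Finset

variable {V : Type*}

/-- The Steinerberger boundary of a graph. -/
def sBoundary (G : SimpleGraph V) [Fintype V] [DecidableRel G.Adj] : Set V :=
  if Fintype.card V = 1 then Set.univ
  else {v | ∃ u : V, ∑ w ∈ G.neighborFinset v, G.dist w u < G.degree v * G.dist v u}

/-- A vertex of a connected graph is a cut vertex if deleting it (and all incident edges)
leaves a graph that is not connected. -/
def IsCutVertex (G : SimpleGraph V) (v : V) : Prop :=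
  ¬ (G.induce {w : V | w ≠ v}).Connected

private lemma penultimate {G : SimpleGraph V} (hc : G.Connected) {v u : V} (hne : v ≠ u) :
    ∃ w, G.Adj v w ∧ G.dist w u + 1 ≤ G.dist v u := by
  obtain ⟨p, hp⟩ := hc.exists_walk_length_eq_dist v u
  cases p with
  | nil => exact absurd rfl hne
  | cons h q =>
    refine ⟨_, h, ?_⟩
    have := SimpleGraph.dist_le q
    simp only [SimpleGraph.Walk.length_cons] at hp
    omega

theorem degree_two_boundary_or_cut [Fintype V] (G : SimpleGraph V)
    [DecidableRel G.Adj] (hc : G.Connected) (v : V) (hv : G.degree v = 2) :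
    v ∈ sBoundary G ∨ IsCutVertex G v := by
  classical
  by_contra hcon
  push_neg at hcon
  obtain ⟨hB, hC⟩ := hcon
  rw [IsCutVertex, not_not] at hC
  have hcard : (G.neighborFinset v).card = 2 := by rwa [SimpleGraph.card_neighborFinset_eq_degree]
  obtain ⟨a, b, hab, hN⟩ := Finset.card_eq_two.mp hcard
  have hva : G.Adj v a := by rw [← SimpleGraph.mem_neighborFinset, hN]; simp
  have hvb : G.Adj v b := by rw [← SimpleGraph.mem_neighborFinset, hN]; simp
  have hnt : Nontrivial V := ⟨a, b, hab⟩
  have hcard1 : Fintype.card V ≠ 1 := (Fintype.one_lt_card).ne'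
  rw [sBoundary, if_neg hcard1] at hB
  simp only [Set.mem_setOf_eq, not_exists, not_lt] at hB
  -- hB : ∀ u, G.degree v * G.dist v u ≤ ∑ w ∈ G.neighborFinset v, G.dist w u
  have hsum : ∀ u : V, 2 * G.dist v u ≤ G.dist a u + G.dist b u := by
    intro u
    have := hB u
    rwa [hN, Finset.sum_pair hab, hv] at this
  -- dichotomy
  have key : ∀ u : V, u ≠ v → G.dist a u + 2 ≤ G.dist b u ∨ G.dist b u + 2 ≤ G.dist a u := by
    intro u hu
    obtain ⟨w, hw, hwd⟩ := penultimate hc hu.symm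
    have hwmem : w ∈ G.neighborFinset v := by rw [SimpleGraph.mem_neighborFinset]; exact hw
    rw [hN] at hwmem
    have hs := hsum u
    rcases Finset.mem_insert.mp hwmem with rfl | hwb
    · left; omega
    · right; rw [Finset.mem_singleton] at hwb; subst hwb; omega
  -- a and b are not v
  have hav : a ≠ v := fun h => G.irrefl (h ▸ hva)
  have hbv : b ≠ v := fun h => G.irrefl (h ▸ hvb)
  -- invariant propagation along walks in the induced graph
  have step : ∀ {x y : {w : V // w ∈ {w : V | w ≠ v}}},
      (G.induce {w : V | w ≠ v}).Adj x y →
      G.dist a x.val + 2 ≤ G.dist b x.val → G.dist a y.val + 2 ≤ G.dist b y.val := by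
    intro x y hadj hx
    have hxy : G.Adj x.val y.val := hadj
    have h1 : G.dist x.val y.val = 1 := SimpleGraph.dist_eq_one_iff_adj.mpr hxy
    have t1 : G.dist a y.val ≤ G.dist a x.val + G.dist x.val y.val := hc.dist_triangle
    have t2 : G.dist b x.val ≤ G.dist b y.val + G.dist y.val x.val := hc.dist_triangle
    have h2 : G.dist y.val x.val = 1 := SimpleGraph.dist_eq_one_iff_adj.mpr hxy.symm
    rcases key y.val y.2 with h | h
    · exact h
    · omega
  have inv : ∀ {x y : {w : V // w ∈ {w : V | w ≠ v}}},
      (G.induce {w : V | w ≠ v}).Walk x y →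
      G.dist a x.val + 2 ≤ G.dist b x.val → G.dist a y.val + 2 ≤ G.dist b y.val := by
    intro x y p
    induction p with
    | nil => exact id
    | cons h q ih => exact fun hx => ih (step h hx)
  -- a is in A
  have ha' : (a : V) ∈ {w : V | w ≠ v} := hav
  have hb' : (b : V) ∈ {w : V | w ≠ v} := hbv
  have hPa : G.dist a a + 2 ≤ G.dist b a := by
    rcases key a hav with h | h
    · exact h
    · rw [SimpleGraph.dist_self] at h; omega
  obtain ⟨p⟩ := hC ⟨a, ha'⟩ ⟨b, hb'⟩
  have := inv p hPa
  rw [SimpleGraph.dist_self] at this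
  omega
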